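/- If a finite set X of linear λ-terms is duplicable, then every term in X is closed. -/
import Mathlib


/-!
Core development: untyped λ-terms in de Bruijn representation, linearity,
β- and η-reduction, as in the paper "A type-assignment of linear erasure
and duplication" (Curzi, Roversi).
-/

namespace LEMPaper

/-- Untyped λ-terms, de Bruijn representation. -/
inductive Lam : Type
  | var : ℕ → Lam
  | app : Lam → Lam → Lam
  | lam : Lam → Lam
  deriving DecidableEq

namespace Lam

/-- Lift a renaming under a binder. -/
def liftRen (ρ : ℕ → ℕ) : ℕ → ℕ
  | 0 => 0
  | n + 1 => ρ n + 1

/-- Apply a renaming of free variables. -/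
def rename (ρ : ℕ → ℕ) : Lam → Lam
  | var n => var (ρ n)
  | app M N => app (M.rename ρ) (N.rename ρ)
  | lam M => lam (M.rename (liftRen ρ))

/-- Shift all free variables up by one. -/
def shift (M : Lam) : Lam := M.rename Nat.succ

/-- Lift a simultaneous substitution under a binder. -/
def liftSub (s : ℕ → Lam) : ℕ → Lam
  | 0 => var 0
  | n + 1 => (s n).shift

/-- Simultaneous (capture-avoiding) substitution. -/
def substAll (s : ℕ → Lam) : Lam → Lam
  | var n => s n
  | app M N => app (M.substAll s) (N.substAll s)
  | lam M => lam (M.substAll (liftSub s))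

/-- Capture-avoiding substitution `M[N/n]`; the variables above `n` are decremented. -/
def subst (M : Lam) (n : ℕ) (N : Lam) : Lam :=
  M.substAll (fun m => if m < n then var m else if m = n then N else var (m - 1))

/-- Number of (free) occurrences of the variable `n` in a term. -/
def countFree : Lam → ℕ → ℕ
  | var m, n => if m = n then 1 else 0
  | app M N, n => M.countFree n + N.countFree n
  | lam M, n => M.countFree (n + 1)

/-- A term is closed when it has no free variables. -/
def Closed (M : Lam) : Prop := ∀ n, M.countFree n = 0

/-- A λ-term is linear if all of its free variables occur exactly once in it and
every abstraction binds a variable occurring exactly once in its (linear) body. -/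
def Linear : Lam → Prop
  | var _ => True
  | app M N => M.Linear ∧ N.Linear ∧ ∀ n, M.countFree n = 0 ∨ N.countFree n = 0
  | lam M => M.Linear ∧ M.countFree 0 = 1

/-- The identity combinator `I = λx.x`. -/
def I : Lam := lam (var 0)

/-- The linear pairing `⟨M,N⟩ = λz. z M N`. -/
def pair (M N : Lam) : Lam := lam (app (app (var 0) M.shift) N.shift)

/-- The size (number of nodes of the syntax tree) of a term. -/
def size : Lam → ℕ
  | var _ => 1
  | app M N => M.size + N.size + 1
  | lam M => M.size + 1

/-- One-step β-reduction, closed under arbitrary contexts. -/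
inductive Beta : Lam → Lam → Prop
  | beta (M N : Lam) : Beta (app (lam M) N) (M.subst 0 N)
  | appL {M M'} (N : Lam) : Beta M M' → Beta (app M N) (app M' N)
  | appR (M : Lam) {N N'} : Beta N N' → Beta (app M N) (app M N')
  | lam {M M'} : Beta M M' → Beta (lam M) (lam M')

/-- One-step η-reduction `λx.Mx →η M` (x not free in M), closed under contexts. -/
inductive Eta : Lam → Lam → Prop
  | eta (M : Lam) : Eta (lam (app M.shift (var 0))) M
  | appL {M M'} (N : Lam) : Eta M M' → Eta (app M N) (app M' N)
  | appR (M : Lam) {N N'} : Eta N N' → Eta (app M N) (app M N')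
  | lam {M M'} : Eta M M' → Eta (lam M) (lam M')

/-- One-step βη-reduction. -/
def BetaEta (M N : Lam) : Prop := Beta M N ∨ Eta M N

/-- A value is a closed linear λ-term in β-normal form. -/
def IsValue (V : Lam) : Prop := V.Linear ∧ V.Closed ∧ ∀ W, ¬ Beta V W

end Lam

end LEMPaper

namespace LEMPaper



namespace Lam

lemma liftRen_injective {ρ : ℕ → ℕ} (h : Function.Injective ρ) :
    Function.Injective (liftRen ρ) := by
  intro a b hab
  cases a with
  | zero => cases b with
    | zero => rfl
    | succ b => simp [liftRen] at hab
  | succ a => cases b with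
    | zero => simp [liftRen] at hab
    | succ b => simp only [liftRen, Nat.add_right_cancel_iff] at hab
                exact congrArg Nat.succ (h hab)

lemma countFree_rename_eq (M : Lam) : ∀ ρ : ℕ → ℕ, Function.Injective ρ →
    ∀ m, countFree (M.rename ρ) (ρ m) = countFree M m := by
  induction M with
  | var n => intro ρ h m; simp [rename, countFree, h.eq_iff]
  | app P Q ihP ihQ => intro ρ h m; simp [rename, countFree, ihP ρ h m, ihQ ρ h m]
  | lam P ih =>
    intro ρ h m
    have := ih (liftRen ρ) (liftRen_injective h) (m + 1)
    simpa [rename, countFree, liftRen] using this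

lemma countFree_rename_zero (M : Lam) : ∀ (ρ : ℕ → ℕ) (n : ℕ), (∀ m, ρ m ≠ n) →
    countFree (M.rename ρ) n = 0 := by
  induction M with
  | var k => intro ρ n h; simp [rename, countFree, h k]
  | app P Q ihP ihQ => intro ρ n h; simp [rename, countFree, ihP ρ n h, ihQ ρ n h]
  | lam P ih =>
    intro ρ n h
    have : ∀ m, liftRen ρ m ≠ n + 1 := by
      intro m
      cases m with
      | zero => simp [liftRen]
      | succ m => simp only [liftRen]; exact fun hh => h m (by omega)
    simpa [rename, countFree] using ih (liftRen ρ) (n + 1) this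

lemma countFree_shift_succ (M : Lam) (n : ℕ) :
    countFree M.shift (n + 1) = countFree M n :=
  countFree_rename_eq M Nat.succ Nat.succ_injective n

lemma countFree_shift_zero (M : Lam) : countFree M.shift 0 = 0 :=
  countFree_rename_zero M Nat.succ 0 (fun m => Nat.succ_ne_zero m)

lemma liftSub_single (k : ℕ) (N : Lam) :
    liftSub (fun m => if m < k then var m else if m = k then N else var (m - 1)) =
      (fun m => if m < k + 1 then var m else if m = k + 1 then N.shift
                else var (m - 1)) := by
  funext m
  cases m with
  | zero => simp [liftSub]
  | succ m =>
    simp only [liftSub]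
    by_cases h1 : m < k
    · simp [h1, Nat.succ_lt_succ h1, shift, rename]
    · by_cases h2 : m = k
      · simp [h1, h2]
      · have h3 : ¬ m + 1 < k + 1 := by omega
        have h4 : m + 1 ≠ k + 1 := by omega
        simp only [h1, h2, if_neg h3, if_neg h4, if_false, shift, rename]
        congr 1
        omega

lemma countFree_subst (M : Lam) : ∀ (k : ℕ) (N : Lam) (n : ℕ),
    countFree (M.subst k N) n =
      countFree M (if n < k then n else n + 1) + countFree M k * countFree N n := by
  induction M with
  | var m =>
    intro k N n
    simp only [subst, substAll, countFree]
    by_cases h1 : m < k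
    · have h2 : m ≠ k := by omega
      by_cases h3 : n < k
      · simp [h1, h2, h3, countFree]
      · have e1 : m ≠ n + 1 := by omega
        have e2 : m ≠ n := by omega
        simp [h1, h2, h3, countFree, e1, e2]
    · by_cases h2 : m = k
      · subst h2
        by_cases h3 : n < m
        · have : m ≠ n := by omega
          simp [h1, countFree, h3, this]
        · have : m ≠ n + 1 := by omega
          simp [h1, countFree, h3, this]
      · by_cases h3 : n < k
        · have e1 : m - 1 ≠ n := by omega
          have e2 : m ≠ n := by omega
          simp [h1, h2, countFree, h3, e1, e2]
        · have e : (m - 1 = n) ↔ (m = n + 1) := by omega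
          simp [h1, h2, countFree, h3, e]
  | app P Q ihP ihQ =>
    intro k N n
    have eP := ihP k N n
    have eQ := ihQ k N n
    simp only [subst] at eP eQ ⊢
    simp only [substAll, countFree, eP, eQ]
    ring
  | lam P ih =>
    intro k N n
    simp only [subst, substAll, liftSub_single, countFree]
    have := ih (k + 1) N.shift (n + 1)
    simp only [subst] at this
    rw [this, countFree_shift_succ]
    by_cases h : n < k
    · simp [h, Nat.succ_lt_succ h]
    · have h2 : ¬ n + 1 < k + 1 := by omega
      simp [h, h2]

lemma linear_rename_iff (M : Lam) : ∀ ρ : ℕ → ℕ, Function.Injective ρ →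
    ((M.rename ρ).Linear ↔ M.Linear) := by
  induction M with
  | var m => intro ρ h; simp [rename, Linear]
  | app P Q ihP ihQ =>
    intro ρ h
    simp only [rename, Linear, ihP ρ h, ihQ ρ h]
    constructor
    · rintro ⟨h1, h2, h3⟩
      refine ⟨h1, h2, fun n => ?_⟩
      have := h3 (ρ n)
      rwa [countFree_rename_eq P ρ h, countFree_rename_eq Q ρ h] at this
    · rintro ⟨h1, h2, h3⟩
      refine ⟨h1, h2, fun n => ?_⟩
      by_cases hn : ∃ m, ρ m = n
      · obtain ⟨m, rfl⟩ := hn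
        rw [countFree_rename_eq P ρ h, countFree_rename_eq Q ρ h]
        exact h3 m
      · push_neg at hn
        left; exact countFree_rename_zero P ρ n hn
  | lam P ih =>
    intro ρ h
    have h0 : liftRen ρ 0 = 0 := rfl
    simp only [rename, Linear, ih (liftRen ρ) (liftRen_injective h)]
    have := countFree_rename_eq P (liftRen ρ) (liftRen_injective h) 0
    rw [h0] at this
    rw [this]

lemma linear_shift (M : Lam) (h : M.Linear) : M.shift.Linear :=
  (linear_rename_iff M Nat.succ Nat.succ_injective).2 h

lemma linear_subst (M : Lam) : ∀ (k : ℕ) (N : Lam), M.Linear → N.Linear →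
    (∀ n, countFree M (if n < k then n else n + 1) = 0 ∨ countFree N n = 0) →
    (M.subst k N).Linear := by
  induction M with
  | var m =>
    intro k N _ hN _
    simp only [subst, substAll]
    split_ifs <;> first | exact trivial | exact hN
  | app P Q ihP ihQ =>
    intro k N hM hN hd
    obtain ⟨hP, hQ, hPQ⟩ := hM
    have hdP : ∀ n, countFree P (if n < k then n else n + 1) = 0 ∨ countFree N n = 0 := by
      intro n; rcases hd n with h | h
      · left; simp only [countFree] at h; omega
      · right; exact h
    have hdQ : ∀ n, countFree Q (if n < k then n else n + 1) = 0 ∨ countFree N n = 0 := by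
      intro n; rcases hd n with h | h
      · left; simp only [countFree] at h; omega
      · right; exact h
    refine ⟨ihP k N hP hN hdP, ihQ k N hQ hN hdQ, fun n => ?_⟩
    show countFree (P.subst k N) n = 0 ∨ countFree (Q.subst k N) n = 0
    rw [countFree_subst, countFree_subst]
    by_cases hc : countFree N n = 0
    · rcases hPQ (if n < k then n else n + 1) with h | h
      · left; rw [h, hc]; ring
      · right; rw [h, hc]; ring
    · rcases hd n with h | h
      · simp only [countFree] at h
        rcases hPQ k with h2 | h2
        · left; rw [h2]; omega
        · right; rw [h2]; omega
      · exact absurd h hc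
  | lam P ih =>
    intro k N hM hN hd
    obtain ⟨hP, hP0⟩ := hM
    have hdP : ∀ n, countFree P (if n < k + 1 then n else n + 1) = 0 ∨
        countFree N.shift n = 0 := by
      intro n
      cases n with
      | zero => right; exact countFree_shift_zero N
      | succ m =>
        rcases hd m with h | h
        · left
          simp only [countFree] at h
          rcases Nat.lt_or_ge m k with hm | hm
          · simpa [hm, Nat.succ_lt_succ hm] using h
          · have e1 : ¬ m < k := by omega
            have e2 : ¬ m + 1 < k + 1 := by omega
            simpa [e1, e2] using h
        · right; rw [countFree_shift_succ]; exact h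
    have hlin := ih (k + 1) N.shift hP (linear_shift N hN) hdP
    have hcnt : countFree (P.subst (k + 1) N.shift) 0 = 1 := by
      rw [countFree_subst]
      simp [countFree_shift_zero, hP0]
    show Linear (lam (P.substAll (liftSub _)))
    rw [show (P.substAll (liftSub _) : Lam) = P.subst (k + 1) N.shift by
      simp only [subst, liftSub_single]]
    exact ⟨hlin, hcnt⟩

lemma beta_preserve {M N : Lam} (h : Beta M N) (hM : M.Linear) :
    N.Linear ∧ ∀ n, countFree N n = countFree M n := by
  induction h with
  | beta P Q =>
    obtain ⟨⟨hP, hP0⟩, hQ, hd⟩ := hM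
    have hd' : ∀ n, countFree P (if n < 0 then n else n + 1) = 0 ∨
        countFree Q n = 0 := by
      intro n
      simpa [countFree] using hd n
    constructor
    · exact linear_subst P 0 Q hP hQ hd'
    · intro n
      rw [countFree_subst, hP0]
      simp [countFree]
  | appL Q hs ih =>
    obtain ⟨hP, hQ, hd⟩ := hM
    obtain ⟨hlin, hcnt⟩ := ih hP
    refine ⟨⟨hlin, hQ, fun n => by rw [hcnt n]; exact hd n⟩, fun n => ?_⟩
    simp only [countFree, hcnt n]
  | appR P hs ih =>
    obtain ⟨hP, hQ, hd⟩ := hM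
    obtain ⟨hlin, hcnt⟩ := ih hQ
    refine ⟨⟨hP, hlin, fun n => by rw [hcnt n]; exact hd n⟩, fun n => ?_⟩
    simp only [countFree, hcnt n]
  | lam hs ih =>
    obtain ⟨hP, hP0⟩ := hM
    obtain ⟨hlin, hcnt⟩ := ih hP
    exact ⟨⟨hlin, by rw [hcnt 0]; exact hP0⟩, fun n => by
      simp only [countFree, hcnt (n + 1)]⟩

lemma eta_preserve {M N : Lam} (h : Eta M N) (hM : M.Linear) :
    N.Linear ∧ ∀ n, countFree N n = countFree M n := by
  induction h with
  | eta P =>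
    obtain ⟨⟨hsh, _, _⟩, _⟩ := hM
    constructor
    · exact (linear_rename_iff P Nat.succ Nat.succ_injective).1 hsh
    · intro n
      simp [countFree, countFree_shift_succ]
  | appL Q hs ih =>
    obtain ⟨hP, hQ, hd⟩ := hM
    obtain ⟨hlin, hcnt⟩ := ih hP
    refine ⟨⟨hlin, hQ, fun n => by rw [hcnt n]; exact hd n⟩, fun n => ?_⟩
    simp only [countFree, hcnt n]
  | appR P hs ih =>
    obtain ⟨hP, hQ, hd⟩ := hM
    obtain ⟨hlin, hcnt⟩ := ih hQ
    refine ⟨⟨hP, hlin, fun n => by rw [hcnt n]; exact hd n⟩, fun n => ?_⟩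
    simp only [countFree, hcnt n]
  | lam hs ih =>
    obtain ⟨hP, hP0⟩ := hM
    obtain ⟨hlin, hcnt⟩ := ih hP
    exact ⟨⟨hlin, by rw [hcnt 0]; exact hP0⟩, fun n => by
      simp only [countFree, hcnt (n + 1)]⟩

lemma betaEta_preserve {M N : Lam} (h : BetaEta M N) (hM : M.Linear) :
    N.Linear ∧ ∀ n, countFree N n = countFree M n := by
  rcases h with h | h
  · exact beta_preserve h hM
  · exact eta_preserve h hM

lemma rtg_preserve {M N : Lam} (h : Relation.ReflTransGen BetaEta M N)
    (hM : M.Linear) : N.Linear ∧ ∀ n, countFree N n = countFree M n := by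
  induction h with
  | refl => exact ⟨hM, fun _ => rfl⟩
  | tail _ hstep ih =>
    obtain ⟨hlin, hcnt⟩ := ih
    obtain ⟨hlin', hcnt'⟩ := betaEta_preserve hstep hlin
    exact ⟨hlin', fun n => by rw [hcnt' n, hcnt n]⟩

end Lam

/-- A set `X` of linear λ-terms is *duplicable* if there is a linear λ-term `D`
(a duplicator of `X`) such that `D M →βη* ⟨M,M⟩` and `FV(D) ∩ FV(M) = ∅`,
for every `M ∈ X`. -/
def Duplicable (X : Set Lam) : Prop :=
  ∃ D : Lam, D.Linear ∧ ∀ M ∈ X,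
    Relation.ReflTransGen Lam.BetaEta (Lam.app D M) (Lam.pair M M) ∧
    ∀ n, D.countFree n = 0 ∨ M.countFree n = 0

/-- Proposition 2.2: if a finite set of linear λ-terms is
duplicable then all of its elements are closed. -/
theorem duplicable_implies_all_closed
    (X : Set Lam) (hfin : X.Finite) (hlin : ∀ M ∈ X, Lam.Linear M)
    (hdup : Duplicable X) :
    ∀ M ∈ X, Lam.Closed M := by
  intro M hMX n
  obtain ⟨D, hD, hDspec⟩ := hdup
  obtain ⟨hred, hdisj⟩ := hDspec M hMX
  have hMlin := hlin M hMX
  have happ : (Lam.app D M).Linear := ⟨hD, hMlin, hdisj⟩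
  obtain ⟨_, hcnt⟩ := Lam.rtg_preserve hred happ
  have h := hcnt n
  simp only [Lam.pair, Lam.countFree, Lam.countFree_shift_succ,
    Nat.succ_ne_zero, if_neg (Nat.succ_ne_zero n).symm] at h
  rcases hdisj n with hz | hz
  · omega
  · exact hz

end LEMPaper
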